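/- Let F be a finite field, s a positive natural number, y, y' ∈ F^s with y ≠ y', and t, t' ∈ F. Then the number of pairs (c, d) ∈ F × F such that h_{c,d}(y) = t and h_{c,d}(y') = t' is at most s. -/

import Mathlib

open Polynomial

/-- For a finite field `F`, a positive `s`, distinct messages `y ≠ y'` in `F^s`
and tags `t, t' ∈ F`, the number of parameter pairs `(c, d) ∈ F × F` with
`h_{c,d}(y) = t` and `h_{c,d}(y') = t'`, where
`h_{c,d}(y) = d + ∑_{j=1}^s c^j yⱼ`, is at most `s`. -/
theorem dske_message_tag_collision_count {F : Type*} [Field F] [Fintype F]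
    (s : ℕ) (hs : 0 < s) (y y' : Fin s → F) (hyy' : y ≠ y') (t t' : F) :
    Nat.card {cd : F × F //
      cd.2 + ∑ j : Fin s, cd.1 ^ (j.1 + 1) * y j = t ∧
      cd.2 + ∑ j : Fin s, cd.1 ^ (j.1 + 1) * y' j = t'} ≤ s := by
  set p : F[X] := (∑ j : Fin s, C (y j - y' j) * X ^ (j.1 + 1)) - C (t - t') with hp
  obtain ⟨j0, hj0⟩ : ∃ j, y j ≠ y' j := by
    by_contra h; push_neg at h; exact hyy' (funext h)
  have hpne : p ≠ 0 := by
    intro h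
    have := congrArg (fun q => Polynomial.coeff q (j0.1 + 1)) h
    simp only [hp, coeff_sub, coeff_zero, finset_sum_coeff, coeff_C_mul, coeff_X_pow,
      coeff_C] at this
    rw [Finset.sum_eq_single j0] at this
    · simp at this
      exact hj0 (sub_eq_zero.mp (by simpa using this))
    · intro b _ hb
      simp only [Nat.add_right_cancel_iff]
      rw [if_neg (fun h' => hb (Fin.val_injective h'.symm)), mul_zero]
    · simp
  have hdeg : p.natDegree ≤ s := by
    apply natDegree_sub_le_iff_left ?_ |>.mpr ?_
    · exact (natDegree_C _).le.trans (Nat.zero_le s)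
    apply natDegree_sum_le_of_forall_le
    intro j _
    exact (natDegree_C_mul_le _ _).trans (by simp [Nat.succ_le_of_lt j.2])
  -- injection from subtype into roots
  classical
  have hinj : Set.InjOn (fun cd : F × F => cd.1)
      {cd | cd.2 + ∑ j : Fin s, cd.1 ^ (j.1 + 1) * y j = t ∧
        cd.2 + ∑ j : Fin s, cd.1 ^ (j.1 + 1) * y' j = t'} := by
    rintro ⟨c, d⟩ ⟨h1, h2⟩ ⟨c', d'⟩ ⟨h1', h2'⟩ hcc
    simp only at hcc
    subst hcc
    have : d = d' := add_right_cancel (h1.trans h1'.symm)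
    simp [this]
  set S : Set (F × F) := {cd | cd.2 + ∑ j : Fin s, cd.1 ^ (j.1 + 1) * y j = t ∧
      cd.2 + ∑ j : Fin s, cd.1 ^ (j.1 + 1) * y' j = t'} with hS
  have hsub : Prod.fst '' S ⊆ (p.roots.toFinset : Set F) := by
    rintro c ⟨⟨c0, d⟩, ⟨h1, h2⟩, rfl⟩
    rw [Finset.mem_coe, Multiset.mem_toFinset, mem_roots hpne]
    simp only [Finset.mem_coe, Multiset.mem_toFinset,
      mem_roots hpne, IsRoot.def, hp, eval_sub, eval_C, eval_finset_sum,
      eval_mul, eval_pow, eval_X]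
    have : (∑ j : Fin s, (y j - y' j) * c0 ^ (j.1 + 1))
        = (∑ j : Fin s, c0 ^ (j.1+1) * y j) - (∑ j : Fin s, c0 ^ (j.1+1) * y' j) := by
      rw [← Finset.sum_sub_distrib]; congr 1; ext j; ring
    rw [this]
    have h1' : d + ∑ j : Fin s, c0 ^ (j.1+1) * y j = t := h1
    have h2' : d + ∑ j : Fin s, c0 ^ (j.1+1) * y' j = t' := h2
    have ht : t - d = ∑ j : Fin s, c0 ^ (j.1+1) * y j := (eq_sub_of_add_eq' h1').symm
    have ht' : t' - d = ∑ j : Fin s, c0 ^ (j.1+1) * y' j := (eq_sub_of_add_eq' h2').symm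
    rw [← ht, ← ht']; ring
  calc Nat.card {cd : F × F //
      cd.2 + ∑ j : Fin s, cd.1 ^ (j.1 + 1) * y j = t ∧
      cd.2 + ∑ j : Fin s, cd.1 ^ (j.1 + 1) * y' j = t'} = S.ncard := by
        exact Nat.card_coe_set_eq S
    _ = (Prod.fst '' S).ncard := (Set.ncard_image_of_injOn hinj).symm
    _ ≤ (p.roots.toFinset : Set F).ncard := Set.ncard_le_ncard hsub (Set.toFinite _)
    _ = p.roots.toFinset.card := by simp [Set.ncard_coe_finset]
    _ ≤ Multiset.card p.roots := p.roots.toFinset_card_le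
    _ ≤ p.natDegree := p.card_roots' 
    _ ≤ s := hdeg
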